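/- For orthogonal projections P,Q on a complex Hilbert space, the spectral radius of the commutator satisfies ρ([P,Q]) ≤ 1/2. -/
import Mathlib

open scoped ENNReal NNReal

theorem stmt_4 {V : Type*} [NormedAddCommGroup V] [InnerProductSpace ℂ V] [CompleteSpace V]
    (P Q : V →L[ℂ] V)
    (hP : ContinuousLinearMap.adjoint P = P) (hP2 : P * P = P)
    (hQ : ContinuousLinearMap.adjoint Q = Q) (hQ2 : Q * Q = Q) :
    spectralRadius ℂ (P * Q - Q * P) ≤ 1 / 2 := by
  set R : V →L[ℂ] V := 2 • P - 1 with hR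
  set S : V →L[ℂ] V := 2 • Q - 1 with hS
  have hone : ‖(1 : V →L[ℂ] V)‖ ≤ 1 := by
    rw [ContinuousLinearMap.one_def]; exact ContinuousLinearMap.norm_id_le
  have norm_inv : ∀ (T : V →L[ℂ] V), ContinuousLinearMap.adjoint T = T → T * T = T →
      ‖(2 • T - 1 : V →L[ℂ] V)‖ ≤ 1 := by
    intro T hT hT2
    have hstar : star (2 • T - 1 : V →L[ℂ] V) = 2 • T - 1 := by
      rw [star_sub, star_one, star_nsmul, ContinuousLinearMap.star_eq_adjoint, hT]
    have hsq : (2 • T - 1 : V →L[ℂ] V) * (2 • T - 1) = 1 := by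
      have h : (2 • T - 1 : V →L[ℂ] V) * (2 • T - 1) = 4 • (T * T) - 4 • T + 1 := by
        noncomm_ring
      rw [h, hT2]; abel
    have h := CStarRing.norm_star_mul_self (x := (2 • T - 1 : V →L[ℂ] V))
    rw [hstar, hsq] at h
    nlinarith [norm_nonneg (2 • T - 1 : V →L[ℂ] V)]
  have hRn : ‖R‖ ≤ 1 := norm_inv P hP hP2
  have hSn : ‖S‖ ≤ 1 := norm_inv Q hQ hQ2
  have hcomm : R * S - S * R = 4 • (P * Q - Q * P) := by
    rw [hR, hS]; noncomm_ring
  have hnorm : ‖P * Q - Q * P‖ ≤ 1 / 2 := by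
    have h1 : ‖R * S - S * R‖ ≤ 2 := by
      calc ‖R * S - S * R‖ ≤ ‖R * S‖ + ‖S * R‖ := norm_sub_le _ _
        _ ≤ ‖R‖ * ‖S‖ + ‖S‖ * ‖R‖ := by
            gcongr <;> [exact norm_mul_le _ _; exact norm_mul_le _ _]
        _ ≤ 2 := by nlinarith [norm_nonneg R, norm_nonneg S]
    have h2 : ‖(4 : ℕ) • (P * Q - Q * P)‖ = 4 * ‖P * Q - Q * P‖ := by
      rw [← Nat.cast_smul_eq_nsmul ℝ, norm_smul]; norm_num
    rw [hcomm, h2] at h1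
    linarith
  have hnn : ‖P * Q - Q * P‖₊ ≤ (1 / 2 : ℝ≥0) := by
    rw [← NNReal.coe_le_coe]; push_cast; exact hnorm
  rcases subsingleton_or_nontrivial V with hV | hV
  · have hempty : spectrum ℂ (P * Q - Q * P) = ∅ := by
      ext z; simp [spectrum.mem_iff, isUnit_of_subsingleton]
    rw [spectralRadius, hempty]
    simp
  calc spectralRadius ℂ (P * Q - Q * P) ≤ (‖P * Q - Q * P‖₊ : ℝ≥0∞) :=
        spectrum.spectralRadius_le_nnnorm _
    _ ≤ 1 / 2 := by
        rw [show (1 / 2 : ℝ≥0∞) = ((1 / 2 : ℝ≥0) : ℝ≥0∞) by simp]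
        exact_mod_cast hnn
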